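/- Let y be a string over an alphabet Σ, let T ≥ 1, and let x = x^1 ∘ x^2 ∘ ⋯ ∘ x^T be a concatenation of strings over Σ. For each i ∈ {1,…,T}, let d_i = min over all contiguous substrings w of y (including the empty string) of ED(x^i, w), and let w_i be a contiguous substring of y attaining this minimum. Let ỹ = w_1 ∘ w_2 ∘ ⋯ ∘ w_T. Then ED(x, y) ≤ ED(y, ỹ) + Σ_{i=1}^T d_i ≤ 3 · ED(x, y). -/

import Mathlib

open List

/-! The Levenshtein distance was removed from Mathlib; the old definitions
(Mathlib/Data/List/EditDistance/Defs.lean) are restated here verbatim in meaning. -/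

namespace Levenshtein

/-- Costs of the edit operations (old Mathlib `Levenshtein.Cost`). -/
structure Cost (α β δ : Type*) where
  delete : α → δ
  insert : β → δ
  substitute : α → β → δ

/-- Unit costs (old Mathlib `Levenshtein.defaultCost`). -/
def defaultCost {α : Type*} [DecidableEq α] : Cost α α ℕ where
  delete _ := 1
  insert _ := 1
  substitute a b := if a = b then 0 else 1

/-- Old Mathlib `Levenshtein.impl`. -/
def impl {α β δ : Type*} [AddZeroClass δ] [Min δ] (C : Cost α β δ) (xs : List α) (y : β)
    (d : {r : List δ // 0 < r.length}) : {r : List δ // 0 < r.length} :=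
  let ⟨ds, w⟩ := d
  xs.zip (ds.zip ds.tail) |>.foldr
    (init := ⟨[ds.getLast (List.ne_nil_of_length_pos w) + C.insert y], by simp⟩)
    (fun ⟨x, d₀, d₁⟩ ⟨r, w⟩ =>
      ⟨min (C.delete x + r[0]) (min (C.insert y + d₀) (C.substitute x y + d₁)) :: r, by simp⟩)

end Levenshtein

/-- Old Mathlib `suffixLevenshtein`. -/
def suffixLevenshtein {α β δ : Type*} [AddZeroClass δ] [Min δ] (C : Levenshtein.Cost α β δ)
    (xs : List α) (ys : List β) : {r : List δ // 0 < r.length} :=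
  ys.foldr
    (Levenshtein.impl C xs)
    (xs.foldr (init := ⟨[0], by simp⟩) (fun a ⟨r, w⟩ => ⟨(C.delete a + r[0]) :: r, by simp⟩))

/-- Old Mathlib `levenshtein`. -/
def levenshtein {α β δ : Type*} [AddZeroClass δ] [Min δ] (C : Levenshtein.Cost α β δ)
    (xs : List α) (ys : List β) : δ :=
  let ⟨r, _⟩ := suffixLevenshtein C xs ys
  r[0]

/-- Edit distance: minimum number of single-symbol insertions, deletions and
substitutions needed to transform `u` into `v` (Levenshtein distance with unit costs). -/
def ED {α : Type*} [DecidableEq α] (u v : List α) : ℕ :=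
  levenshtein Levenshtein.defaultCost u v


namespace Levenshtein

theorem step_cons_port {α β δ : Type*} [AddZeroClass δ] [Min δ] (C : Cost α β δ)
    {x : α} {xs : List α} {y : β} {d : δ} {ds : List δ} (w) (w' : 0 < List.length ds) :
    impl C (x :: xs) y ⟨d :: ds, w⟩ =
      ⟨min (C.delete x + (impl C xs y ⟨ds, w'⟩).1[0]'(impl C xs y ⟨ds, w'⟩).2)
        (min (C.insert y + d) (C.substitute x y + ds[0])) :: (impl C xs y ⟨ds, w'⟩).1,
        by simp⟩ :=
  match ds, w' with | _ :: _, _ => rfl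

theorem step_length_port {α β δ : Type*} [AddZeroClass δ] [Min δ] (C : Cost α β δ)
    (xs : List α) (y : β) (d : {r : List δ // 0 < r.length})
    (w : d.1.length = xs.length + 1) :
    (impl C xs y d).1.length = xs.length + 1 := by
  induction xs generalizing d with
  | nil => cases d; rfl
  | cons x xs ih =>
    match d, w with
    | ⟨d₁ :: d₂ :: ds, _⟩, w =>
      rw [step_cons_port C _ (by simp)]
      simp only [List.length_cons]
      congr 1
      exact ih ⟨d₂ :: ds, by simp⟩ (by simpa using w)

theorem sL_cons_nil_port {α β δ : Type*} [AddZeroClass δ] [Min δ] (C : Cost α β δ)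
    (x : α) (xs : List α) :
    (suffixLevenshtein C (x :: xs) []).1 =
      (C.delete x + (suffixLevenshtein C xs []).1[0]'(suffixLevenshtein C xs []).2) ::
        (suffixLevenshtein C xs []).1 := rfl

theorem sL_length_port {α β δ : Type*} [AddZeroClass δ] [Min δ] (C : Cost α β δ)
    (xs : List α) (ys : List β) :
    (suffixLevenshtein C xs ys).1.length = xs.length + 1 := by
  induction ys with
  | nil =>
    induction xs with
    | nil => rfl
    | cons x xs ih => rw [sL_cons_nil_port, List.length_cons, ih, List.length_cons]
  | cons y ys ih =>
    exact step_length_port C xs y _ ih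

theorem cons_head_tail_port {δ : Type*} (l : List δ) (h : 0 < l.length) :
    l = l[0] :: l.tail := by
  cases l with
  | nil => simp at h
  | cons a l => rfl

theorem sL_cons₁_port {α β δ : Type*} [AddZeroClass δ] [Min δ] (C : Cost α β δ)
    (x : α) (xs : List α) (ys : List β) :
    suffixLevenshtein C (x :: xs) ys =
      ⟨levenshtein C (x :: xs) ys :: (suffixLevenshtein C xs ys).1, by simp⟩ := by
  induction ys with
  | nil =>
    apply Subtype.ext
    rw [sL_cons_nil_port]
    rfl
  | cons y ys ih =>
    have key : (suffixLevenshtein C (x :: xs) (y :: ys)).1.tail =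
        (suffixLevenshtein C xs (y :: ys)).1 := by
      show (impl C (x :: xs) y (suffixLevenshtein C (x :: xs) ys)).1.tail =
        (impl C xs y (suffixLevenshtein C xs ys)).1
      rw [ih, step_cons_port C _ (suffixLevenshtein C xs ys).2]
      rfl
    apply Subtype.ext
    show (suffixLevenshtein C (x :: xs) (y :: ys)).1 =
      (suffixLevenshtein C (x :: xs) (y :: ys)).1[0]'(suffixLevenshtein C (x :: xs) (y :: ys)).2
        :: (suffixLevenshtein C xs (y :: ys)).1
    rw [← key]
    exact cons_head_tail_port _ _

theorem defaultCost_insert {α : Type*} [DecidableEq α] (a : α) :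
    (defaultCost : Cost α α ℕ).insert a = 1 := rfl

theorem defaultCost_delete {α : Type*} [DecidableEq α] (a : α) :
    (defaultCost : Cost α α ℕ).delete a = 1 := rfl

end Levenshtein

@[simp] theorem levenshtein_nil_nil {α β δ : Type*} [AddZeroClass δ] [Min δ]
    (C : Levenshtein.Cost α β δ) : levenshtein C [] [] = 0 := rfl

theorem levenshtein_cons_nil {α β δ : Type*} [AddZeroClass δ] [Min δ]
    (C : Levenshtein.Cost α β δ) (x : α) (xs : List α) :
    levenshtein C (x :: xs) [] = C.delete x + levenshtein C xs [] := rfl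

theorem levenshtein_nil_cons {α β : Type*} (C : Levenshtein.Cost α β ℕ) (y : β) (ys : List β) :
    levenshtein C [] (y :: ys) = C.insert y + levenshtein C [] ys := by
  have hl := Levenshtein.sL_length_port C [] ys
  show (suffixLevenshtein C [] ys).1.getLast _ + C.insert y =
    C.insert y + (suffixLevenshtein C [] ys).1[0]'(suffixLevenshtein C [] ys).2
  have key : ∀ (l : List ℕ) (h1 : l ≠ []) (h2 : 0 < l.length), l.length = 1 →
      l.getLast h1 = l[0]'h2 := by
    intro l h1 h2 h
    rcases l with _ | ⟨a, _ | ⟨b, l⟩⟩ <;> simp_all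
  exact (congrArg (· + C.insert y) (key _ (List.ne_nil_of_length_pos (suffixLevenshtein C [] ys).2)
    (suffixLevenshtein C [] ys).2 (by simpa using hl))).trans (Nat.add_comm _ _)

theorem levenshtein_cons_cons {α β δ : Type*} [AddZeroClass δ] [Min δ]
    (C : Levenshtein.Cost α β δ) (x : α) (xs : List α) (y : β) (ys : List β) :
    levenshtein C (x :: xs) (y :: ys) =
      min (C.delete x + levenshtein C xs (y :: ys))
        (min (C.insert y + levenshtein C (x :: xs) ys)
          (C.substitute x y + levenshtein C xs ys)) := by
  show (Levenshtein.impl C (x :: xs) y (suffixLevenshtein C (x :: xs) ys)).1[0]'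
    (Levenshtein.impl C (x :: xs) y (suffixLevenshtein C (x :: xs) ys)).2 = _
  rw [Levenshtein.sL_cons₁_port C x xs ys,
    Levenshtein.step_cons_port C _ (suffixLevenshtein C xs ys).2]
  rfl

namespace EDAux

variable {α : Type*} [DecidableEq α]

/-- Substitution cost. -/
def scost (a b : α) : ℕ := if a = b then 0 else 1

lemma scost_comm (a b : α) : scost a b = scost b a := by
  unfold scost
  simp [eq_comm]

lemma scost_triangle (a b c : α) : scost a c ≤ scost a b + scost b c := by
  unfold scost
  split_ifs <;> simp_all

/-- Edit scripts: `A u v n` means `u` can be transformed into `v` with cost `n`. -/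
inductive A : List α → List α → ℕ → Prop
  | nil : A [] [] 0
  | ins {u v n} (b : α) : A u v n → A u (b :: v) (n + 1)
  | del {u v n} (a : α) : A u v n → A (a :: u) v (n + 1)
  | sub {u v n} (a b : α) : A u v n → A (a :: u) (b :: v) (n + scost a b)

lemma A_cast {u v : List α} {n m : ℕ} (h : A u v n) (e : n = m) : A u v m := e ▸ h

lemma ED_nil_nil : ED ([] : List α) [] = 0 := by
  simp [ED]

lemma ED_nil_cons (b : α) (v : List α) : ED [] (b :: v) = ED [] v + 1 := by
  simp only [ED, levenshtein_nil_cons, Levenshtein.defaultCost_insert]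
  omega

lemma ED_cons_nil (a : α) (u : List α) : ED (a :: u) [] = ED u [] + 1 := by
  simp only [ED, levenshtein_cons_nil, Levenshtein.defaultCost_delete]
  omega

lemma ED_cons_cons (a b : α) (u v : List α) :
    ED (a :: u) (b :: v) =
      min (1 + ED u (b :: v)) (min (1 + ED (a :: u) v) (scost a b + ED u v)) := by
  simp only [ED, levenshtein_cons_cons, Levenshtein.defaultCost, scost]

lemma ED_le_ins (u : List α) (b : α) (v : List α) : ED u (b :: v) ≤ ED u v + 1 := by
  cases u with
  | nil => rw [ED_nil_cons]
  | cons a u =>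
    rw [ED_cons_cons]
    refine le_trans (min_le_right _ _) (le_trans (min_le_left _ _) ?_)
    omega

lemma ED_le_del (a : α) (u v : List α) : ED (a :: u) v ≤ ED u v + 1 := by
  cases v with
  | nil => rw [ED_cons_nil]
  | cons b v =>
    rw [ED_cons_cons]
    refine le_trans (min_le_left _ _) ?_
    omega

lemma ED_le_sub (a b : α) (u v : List α) :
    ED (a :: u) (b :: v) ≤ scost a b + ED u v := by
  rw [ED_cons_cons]
  exact le_trans (min_le_right _ _) (min_le_right _ _)

/-- Any edit script bounds the edit distance. -/
lemma A_le {u v : List α} {n : ℕ} (h : A u v n) : ED u v ≤ n := by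
  induction h with
  | nil => simp [ED_nil_nil]
  | ins b h ih => exact le_trans (ED_le_ins _ _ _) (by omega)
  | del a h ih => exact le_trans (ED_le_del _ _ _) (by omega)
  | sub a b h ih =>
    exact le_trans (ED_le_sub a b _ _) (by omega)

/-- The edit distance is realized by an edit script. -/
lemma A_exists (u v : List α) : A u v (ED u v) := by
  induction u generalizing v with
  | nil =>
    induction v with
    | nil => simpa [ED_nil_nil] using A.nil
    | cons b v ih => rw [ED_nil_cons]; exact A.ins b ih
  | cons a u ihu =>
    induction v with
    | nil => rw [ED_cons_nil]; exact A.del a (ihu [])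
    | cons b v ihv =>
      rw [ED_cons_cons]
      rcases min_cases (1 + ED u (b :: v))
          (min (1 + ED (a :: u) v) (scost a b + ED u v)) with ⟨h, -⟩ | ⟨h, -⟩
      · rw [h]
        exact A_cast (A.del a (ihu (b :: v))) (by omega)
      · rw [h]
        rcases min_cases (1 + ED (a :: u) v) (scost a b + ED u v) with ⟨h2, -⟩ | ⟨h2, -⟩
        · rw [h2]
          exact A_cast (A.ins b ihv) (by omega)
        · rw [h2]
          exact A_cast (A.sub a b (ihu v)) (by omega)

lemma A_symm {u v : List α} {n : ℕ} (h : A u v n) : A v u n := by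
  induction h with
  | nil => exact A.nil
  | ins b h ih => exact A.del b ih
  | del a h ih => exact A.ins a ih
  | sub a b h ih => exact A_cast (A.sub b a ih) (by rw [scost_comm])

lemma ED_symm (u v : List α) : ED u v = ED v u :=
  le_antisymm (A_le (A_symm (A_exists v u))) (A_le (A_symm (A_exists u v)))

lemma A_append {u₁ v₁ u₂ v₂ : List α} {m n : ℕ} (h₁ : A u₁ v₁ m) (h₂ : A u₂ v₂ n) :
    A (u₁ ++ u₂) (v₁ ++ v₂) (m + n) := by
  induction h₁ with
  | nil => simpa using h₂
  | ins b h ih => exact A_cast (A.ins b ih) (by omega)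
  | del a h ih => exact A_cast (A.del a ih) (by omega)
  | sub a b h ih => exact A_cast (A.sub a b ih) (by omega)

lemma A_trans_aux : ∀ N : ℕ, ∀ {u v w : List α} {m n : ℕ},
    A u v m → A v w n → u.length + v.length + w.length ≤ N →
    ∃ k, A u w k ∧ k ≤ m + n := by
  intro N
  induction N with
  | zero =>
    intro u v w m n h1 h2 hN
    have hu : u = [] := by cases u <;> simp_all
    have hv : v = [] := by cases v <;> simp_all
    have hw : w = [] := by cases w <;> simp_all
    subst hu; subst hv; subst hw
    exact ⟨0, A.nil, by omega⟩
  | succ N ih =>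
    intro u v w m n h1 h2 hN
    cases h2 with
    | nil =>
      exact ⟨m, h1, by omega⟩
    | ins b h2' =>
      obtain ⟨k, hk, hkle⟩ := ih h1 h2' (by simp at hN ⊢; omega)
      exact ⟨k + 1, A.ins b hk, by omega⟩
    | del a h2' =>
      cases h1 with
      | ins _ h1' =>
        obtain ⟨k, hk, hkle⟩ := ih h1' h2' (by simp at hN ⊢; omega)
        exact ⟨k, hk, by omega⟩
      | del c h1' =>
        obtain ⟨k, hk, hkle⟩ := ih h1' (A.del a h2') (by simp at hN ⊢; omega)
        exact ⟨k + 1, A.del c hk, by omega⟩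
      | sub c _ h1' =>
        obtain ⟨k, hk, hkle⟩ := ih h1' h2' (by simp at hN ⊢; omega)
        exact ⟨k + 1, A.del c hk, by omega⟩
    | sub a b h2' =>
      cases h1 with
      | ins _ h1' =>
        obtain ⟨k, hk, hkle⟩ := ih h1' h2' (by simp at hN ⊢; omega)
        exact ⟨k + 1, A.ins b hk, by omega⟩
      | del c h1' =>
        obtain ⟨k, hk, hkle⟩ := ih h1' (A.sub a b h2') (by simp at hN ⊢; omega)
        exact ⟨k + 1, A.del c hk, by omega⟩
      | sub c _ h1' =>
        obtain ⟨k, hk, hkle⟩ := ih h1' h2' (by simp at hN ⊢; omega)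
        refine ⟨k + scost c b, A.sub c b hk, ?_⟩
        have := scost_triangle c a b
        omega

lemma ED_triangle (u v w : List α) : ED u w ≤ ED u v + ED v w := by
  obtain ⟨k, hk, hkle⟩ :=
    A_trans_aux (u.length + v.length + w.length) (A_exists u v) (A_exists v w) le_rfl
  exact le_trans (A_le hk) hkle

lemma ED_append_le (a b c d : List α) : ED (a ++ b) (c ++ d) ≤ ED a c + ED b d :=
  A_le (A_append (A_exists a c) (A_exists b d))

lemma A_split : ∀ {u v : List α} {n : ℕ}, A u v n → ∀ a b : List α, u = a ++ b →
    ∃ c d m₁ m₂, v = c ++ d ∧ A a c m₁ ∧ A b d m₂ ∧ m₁ + m₂ ≤ n := by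
  intro u v n h
  induction h with
  | nil =>
    intro a b hab
    obtain ⟨ha, hb⟩ : a = [] ∧ b = [] := by simpa using hab.symm
    subst ha; subst hb
    exact ⟨[], [], 0, 0, rfl, A.nil, A.nil, by omega⟩
  | ins bb h ih =>
    intro a b hab
    obtain ⟨c, d, m₁, m₂, rfl, h1, h2, hle⟩ := ih a b hab
    exact ⟨bb :: c, d, m₁ + 1, m₂, rfl, A.ins bb h1, h2, by omega⟩
  | del aa h ih =>
    rename_i u' v' n'
    intro a b hab
    cases a with
    | nil =>
      simp only [List.nil_append] at hab
      subst hab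
      exact ⟨[], v', 0, n' + 1, rfl, A.nil, A.del aa h, by omega⟩
    | cons a0 a' =>
      simp only [List.cons_append, List.cons.injEq] at hab
      obtain ⟨rfl, hab⟩ := hab
      obtain ⟨c, d, m₁, m₂, rfl, h1, h2, hle⟩ := ih a' b hab
      exact ⟨c, d, m₁ + 1, m₂, rfl, A.del _ h1, h2, by omega⟩
  | sub aa bb h ih =>
    rename_i u' v' n'
    intro a b hab
    cases a with
    | nil =>
      simp only [List.nil_append] at hab
      subst hab
      exact ⟨[], bb :: v', 0, n' + scost aa bb, rfl, A.nil, A.sub aa bb h, by omega⟩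
    | cons a0 a' =>
      simp only [List.cons_append, List.cons.injEq] at hab
      obtain ⟨rfl, hab⟩ := hab
      obtain ⟨c, d, m₁, m₂, rfl, h1, h2, hle⟩ := ih a' b hab
      exact ⟨bb :: c, d, _, m₂, rfl, A.sub _ bb h1, h2, by omega⟩

lemma ED_split (a b y : List α) :
    ∃ c d : List α, y = c ++ d ∧ ED a c + ED b d ≤ ED (a ++ b) y := by
  obtain ⟨c, d, m₁, m₂, rfl, h1, h2, hle⟩ := A_split (A_exists (a ++ b) y) a b rfl
  exact ⟨c, d, rfl, le_trans (add_le_add (A_le h1) (A_le h2)) hle⟩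

lemma flatten_ED_le (T : ℕ) (f g : Fin T → List α) :
    ED (List.ofFn f).flatten (List.ofFn g).flatten ≤ ∑ i : Fin T, ED (f i) (g i) := by
  induction T with
  | zero => simp [ED_nil_nil]
  | succ T ih =>
    rw [List.ofFn_succ, List.ofFn_succ (f := g), List.flatten_cons, List.flatten_cons,
      Fin.sum_univ_succ]
    exact le_trans (ED_append_le _ _ _ _) (Nat.add_le_add_left (ih _ _) _)

lemma dec : ∀ (T : ℕ) (f : Fin (T + 1) → List α) (y : List α),
    ∃ g : Fin (T + 1) → List α, (List.ofFn g).flatten = y ∧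
      ∑ i : Fin (T + 1), ED (f i) (g i) ≤ ED (List.ofFn f).flatten y := by
  intro T
  induction T with
  | zero =>
    intro f y
    refine ⟨fun _ => y, by simp, ?_⟩
    simp [List.ofFn_succ]
  | succ T ih =>
    intro f y
    obtain ⟨c, d, rfl, hcd⟩ := ED_split (f 0) (List.ofFn fun i : Fin (T + 1) => f i.succ).flatten (y := y)
    obtain ⟨g', hg'flat, hg'sum⟩ := ih (fun i => f i.succ) d
    refine ⟨Fin.cons c g', ?_, ?_⟩
    · rw [List.ofFn_succ]
      simp only [Fin.cons_zero, Fin.cons_succ]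
      rw [List.flatten_cons, hg'flat]
    · rw [Fin.sum_univ_succ]
      simp only [Fin.cons_zero, Fin.cons_succ]
      calc ED (f 0) c + ∑ i : Fin (T + 1), ED (f i.succ) (g' i)
          ≤ ED (f 0) c + ED (List.ofFn fun i : Fin (T + 1) => f i.succ).flatten d :=
            Nat.add_le_add_left hg'sum _
        _ ≤ ED (f 0 ++ (List.ofFn fun i : Fin (T + 1) => f i.succ).flatten) (c ++ d) := hcd
        _ = ED (List.ofFn f).flatten (c ++ d) := by simp only [List.ofFn_succ, List.flatten_cons]

end EDAux

/-- Let `x = x^1 ∘ ⋯ ∘ x^T` (with `T ≥ 1`), and for each `i` let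
`d_i` be the minimum over all contiguous substrings `w` of `y` of `ED(x^i, w)`, attained
by the contiguous substring `w_i` of `y`.  With `yt = w_1 ∘ ⋯ ∘ w_T` we have
`ED(x, y) ≤ ED(y, yt) + Σ_i d_i ≤ 3·ED(x, y)`. -/
theorem stmt4 {α : Type*} [DecidableEq α] (T : ℕ) (hT : 1 ≤ T)
    (y : List α) (X : Fin T → List α) (W : Fin T → List α) (d : Fin T → ℕ)
    (hd : ∀ i, d i = sInf {k : ℕ | ∃ w : List α, w <:+: y ∧ k = ED (X i) w})
    (hW : ∀ i, W i <:+: y ∧ ED (X i) (W i) = d i) :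
    ED (List.ofFn X).flatten y ≤ ED y (List.ofFn W).flatten + ∑ i : Fin T, d i ∧
    ED y (List.ofFn W).flatten + ∑ i : Fin T, d i ≤ 3 * ED (List.ofFn X).flatten y := by
  obtain ⟨T, rfl⟩ : ∃ T', T = T' + 1 := ⟨T - 1, by omega⟩
  have hsumdW : ∑ i : Fin (T + 1), ED (X i) (W i) = ∑ i : Fin (T + 1), d i :=
    Finset.sum_congr rfl fun i _ => (hW i).2
  constructor
  · -- part 1
    have h1 : ED (List.ofFn X).flatten y ≤ ED (List.ofFn X).flatten (List.ofFn W).flatten + ED (List.ofFn W).flatten y := EDAux.ED_triangle (List.ofFn X).flatten (List.ofFn W).flatten y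
    have h2 : ED (List.ofFn X).flatten (List.ofFn W).flatten ≤ ∑ i : Fin (T + 1), d i := by
      rw [← hsumdW]
      exact EDAux.flatten_ED_le _ X W
    have h3 : ED (List.ofFn W).flatten y = ED y (List.ofFn W).flatten := EDAux.ED_symm _ _
    omega
  · -- part 2
    obtain ⟨g, hgflat, hgsum⟩ := EDAux.dec T X y
    have hinfix : ∀ i, g i <:+: y := by
      intro i
      rw [← hgflat]
      exact List.infix_of_mem_flatten (List.mem_ofFn.mpr ⟨i, rfl⟩)
    have hdle : ∀ i, d i ≤ ED (X i) (g i) := by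
      intro i
      rw [hd i]
      exact Nat.sInf_le ⟨g i, hinfix i, rfl⟩
    have hsumd : ∑ i : Fin (T + 1), d i ≤ ED (List.ofFn X).flatten y :=
      le_trans (Finset.sum_le_sum fun i _ => hdle i) hgsum
    have hyy : ED y (List.ofFn W).flatten ≤ 2 * ED (List.ofFn X).flatten y := by
      have h1 : ED y (List.ofFn W).flatten ≤ ∑ i : Fin (T + 1), ED (g i) (W i) := by
        rw [← hgflat]
        exact EDAux.flatten_ED_le _ g W
      have h2 : ∀ i, ED (g i) (W i) ≤ ED (X i) (g i) + d i := by
        intro i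
        calc ED (g i) (W i) ≤ ED (g i) (X i) + ED (X i) (W i) := EDAux.ED_triangle _ _ _
          _ = ED (X i) (g i) + d i := by rw [EDAux.ED_symm, (hW i).2]
      have h3 : ∑ i : Fin (T + 1), ED (g i) (W i)
          ≤ ∑ i : Fin (T + 1), (ED (X i) (g i) + d i) :=
        Finset.sum_le_sum fun i _ => h2 i
      rw [Finset.sum_add_distrib] at h3
      omega
    omega
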